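/- Let v ≥ u ≥ 2 be integers and let α ∈ [0..2^v) be an odd integer; define h : ℤ → [0..2^u) by h(x) = ⌊(αx mod 2^v)/2^{v−u}⌋, where (αx mod 2^v) denotes the representative in [0..2^v). Then for all integers a, b, c with a+b+c = 0: h(a)+h(b)+h(c) ∈ {0, 2^u−2, 2^u−1, 2^u, 2·2^u−2, 2·2^u−1, 2·2^u}. -/

import Mathlib

/-- The hash function `h(x) = ⌊(αx mod 2^v) / 2^(v−u)⌋`, where `x mod 2^v` is the
representative in `[0..2^v)` (integer `emod`) and the division is floor division of
a non-negative integer. -/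
def hfun (u v : ℕ) (α : ℤ) : ℤ → ℤ :=
  fun x => (α * x % 2 ^ v) / 2 ^ (v - u)

/-- for `v ≥ u ≥ 2` and odd `α ∈ [0..2^v)`, for all integers `a, b, c`
with `a+b+c = 0`,
`h(a)+h(b)+h(c) ∈ {0, 2^u−2, 2^u−1, 2^u, 2·2^u−2, 2·2^u−1, 2·2^u}`. -/
theorem stmt_18 (u v : ℕ) (hu : 2 ≤ u) (huv : u ≤ v)
    (α : ℤ) (hodd : Odd α) (hα0 : 0 ≤ α) (hαv : α < 2 ^ v)
    (a b c : ℤ) (habc : a + b + c = 0) :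
    hfun u v α a + hfun u v α b + hfun u v α c
      ∈ ({0, 2 ^ u - 2, 2 ^ u - 1, 2 ^ u,
          2 * 2 ^ u - 2, 2 * 2 ^ u - 1, 2 * 2 ^ u} : Set ℤ) := by
  have hm0 : (0:ℤ) < 2 ^ (v - u) := by positivity
  have hv0 : (0:ℤ) < 2 ^ v := by positivity
  set m : ℤ := 2 ^ (v - u) with hm
  set N : ℤ := 2 ^ v with hN
  set P : ℤ := 2 ^ u with hP
  have hpow : N = P * m := by
    rw [hN, hP, hm, ← pow_add]
    congr 1
    omega
  set A := α * a % N with hA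
  set B := α * b % N with hB
  set C := α * c % N with hC
  have hA0 : 0 ≤ A := Int.emod_nonneg _ (ne_of_gt hv0)
  have hB0 : 0 ≤ B := Int.emod_nonneg _ (ne_of_gt hv0)
  have hC0 : 0 ≤ C := Int.emod_nonneg _ (ne_of_gt hv0)
  have hAlt : A < N := Int.emod_lt_of_pos _ hv0
  have hBlt : B < N := Int.emod_lt_of_pos _ hv0
  have hClt : C < N := Int.emod_lt_of_pos _ hv0
  -- sum is ≡ 0 mod N
  have hsum : (A + B + C) % N = 0 := by
    have h1 : (A + B + C) % N = (α * a + α * b + α * c) % N := by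
      rw [hA, hB, hC]
      conv_rhs => rw [Int.add_emod, Int.add_emod (α * a)]
      rw [Int.add_emod, Int.add_emod (α * a % N)]
      simp [Int.emod_emod_of_dvd]
    rw [h1, show α * a + α * b + α * c = α * (a + b + c) by ring, habc, mul_zero,
      Int.zero_emod]
  set k : ℤ := (A + B + C) / N with hk
  have hkeq : A + B + C = N * k := by
    have h := Int.mul_ediv_add_emod (A + B + C) N
    rw [← hk] at h
    omega
  have hk0 : 0 ≤ k := by
    rcases le_or_gt 0 k with h | h
    · exact h
    · exfalso
      have h1 : 0 < N * -k := mul_pos hv0 (by linarith)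
      have h2 : N * -k = -(N * k) := by ring
      linarith
  have hk2 : k ≤ 2 := by
    rcases le_or_gt k 2 with h | h
    · exact h
    · exfalso
      have h1 : N * 3 ≤ N * k := mul_le_mul_of_nonneg_left (by linarith) (le_of_lt hv0)
      linarith
  -- decompose each by m
  have hdA := Int.mul_ediv_add_emod A m
  have hdB := Int.mul_ediv_add_emod B m
  have hdC := Int.mul_ediv_add_emod C m
  have hrA0 : 0 ≤ A % m := Int.emod_nonneg _ (ne_of_gt hm0)
  have hrB0 : 0 ≤ B % m := Int.emod_nonneg _ (ne_of_gt hm0)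
  have hrC0 : 0 ≤ C % m := Int.emod_nonneg _ (ne_of_gt hm0)
  have hrAlt : A % m < m := Int.emod_lt_of_pos _ hm0
  have hrBlt : B % m < m := Int.emod_lt_of_pos _ hm0
  have hrClt : C % m < m := Int.emod_lt_of_pos _ hm0
  set S : ℤ := A / m + B / m + C / m with hS
  set t : ℤ := P * k - S with ht
  have hmS : m * S + (A % m + B % m + C % m) = N * k := by
    have h1 : m * S = m * (A / m) + m * (B / m) + m * (C / m) := by rw [hS]; ring
    linarith [hdA, hdB, hdC, hkeq]
  have hRt : A % m + B % m + C % m = m * t := by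
    have h2 : m * t = N * k - m * S := by rw [ht, hpow]; ring
    linarith
  have ht0 : 0 ≤ t := by
    by_contra h
    push_neg at h
    have h1 : 0 < m * -t := mul_pos hm0 (by linarith)
    have h2 : m * -t = -(m * t) := by ring
    linarith
  have ht2 : t ≤ 2 := by
    by_contra h
    push_neg at h
    have h1 : m * 3 ≤ m * t := mul_le_mul_of_nonneg_left (by linarith) (le_of_lt hm0)
    linarith
  have hSeq : S = P * k - t := by linarith [ht]
  have hS0 : 0 ≤ S := by
    have h1 := Int.ediv_nonneg hA0 (le_of_lt hm0)
    have h2 := Int.ediv_nonneg hB0 (le_of_lt hm0)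
    have h3 := Int.ediv_nonneg hC0 (le_of_lt hm0)
    rw [hS]
    linarith
  have hgoal : hfun u v α a + hfun u v α b + hfun u v α c = S := by
    simp only [hfun]
    rfl
  rw [hgoal]
  simp only [Set.mem_insert_iff, Set.mem_singleton_iff]
  interval_cases k <;> omega
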